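/- Consider the matrix M with rows (1,1,1)/2, (1,-1,1)/2, (-1,1,1)/2, (-1,-1,1)/2, defining Ψ: ℝ³ → ℝ⁴ by Ψv = Mv and Φ: ℝ⁴ → ℝ³ by Φw = Mᵀw. Then: (a) Φ ∘ Ψ = Id on ℝ³; (b) Ψ maps the cone generated by (1,0,1), (0,1,1), (-1,0,1), (0,-1,1) into ℝ₊⁴; (c) Φ(ℝ₊⁴) is exactly the cone {(x,y,t) : |x| ≤ t, |y| ≤ t}, i.e., the cone over the full square [-1,1]². -/
import Mathlib


noncomputable section

def Mfact : Matrix (Fin 4) (Fin 3) ℝ :=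
  (1 / 2 : ℝ) • !![1, 1, 1; 1, -1, 1; -1, 1, 1; -1, -1, 1]

def PsiFact (v : Fin 3 → ℝ) : Fin 4 → ℝ := Mfact.mulVec v

def PhiFact (w : Fin 4 → ℝ) : Fin 3 → ℝ := Mfact.transpose.mulVec w

/-- The cone generated by the four extreme points of the kite `Q_{(0,0,0,0)}`
lifted at height 1. -/
def kiteCone : Set (Fin 3 → ℝ) :=
  {v | ∃ a b c d : ℝ, 0 ≤ a ∧ 0 ≤ b ∧ 0 ≤ c ∧ 0 ≤ d ∧
    v = a • ![1, 0, 1] + b • ![0, 1, 1] + c • ![-1, 0, 1] + d • ![0, -1, 1]}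

lemma psi_eq (v : Fin 3 → ℝ) :
    PsiFact v = ![(v 0 + v 1 + v 2)/2, (v 0 - v 1 + v 2)/2,
      (-v 0 + v 1 + v 2)/2, (-v 0 - v 1 + v 2)/2] := by
  funext i
  fin_cases i <;>
    simp [PsiFact, Mfact, Matrix.mulVec, dotProduct, Fin.sum_univ_three] <;> ring

lemma phi_eq (w : Fin 4 → ℝ) :
    PhiFact w = ![(w 0 + w 1 - w 2 - w 3)/2, (w 0 - w 1 + w 2 - w 3)/2,
      (w 0 + w 1 + w 2 + w 3)/2] := by
  funext j
  fin_cases j <;>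
    simp [PhiFact, Mfact, Matrix.mulVec, dotProduct, Fin.sum_univ_four,
      Matrix.transpose_apply, Matrix.vecHead, Matrix.vecTail] <;> ring

theorem full_square_factorisation :
    (∀ v : Fin 3 → ℝ, PhiFact (PsiFact v) = v) ∧
    (∀ v ∈ kiteCone, ∀ i, 0 ≤ PsiFact v i) ∧
    (PhiFact '' {w | ∀ i, 0 ≤ w i}
      = {v : Fin 3 → ℝ | |v 0| ≤ v 2 ∧ |v 1| ≤ v 2}) := by
  refine ⟨?_, ?_, ?_⟩
  · intro v
    rw [psi_eq, phi_eq]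
    funext j
    fin_cases j <;> simp <;> ring
  · rintro v ⟨a, b, c, d, ha, hb, hc, hd, rfl⟩ i
    rw [psi_eq]
    fin_cases i <;> simp <;> linarith
  · ext v
    constructor
    · rintro ⟨w, hw, rfl⟩
      rw [phi_eq]
      have h0 := hw 0; have h1 := hw 1; have h2 := hw 2; have h3 := hw 3
      constructor <;> simp <;> rw [abs_le] <;> constructor <;> linarith
    · rintro ⟨h0, h1⟩
      obtain ⟨hx1, hx2⟩ := abs_le.mp h0
      obtain ⟨hy1, hy2⟩ := abs_le.mp h1
      set x := v 0 with hx
      set y := v 1 with hy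
      set t := v 2 with ht
      set s : ℝ := max (x + y) 0 with hs
      have hs0 : 0 ≤ s := le_max_right _ _
      have hsxy : x + y ≤ s := le_max_left _ _
      have hsx : s ≤ t + x := max_le (by linarith) (by linarith)
      have hsy : s ≤ t + y := max_le (by linarith) (by linarith)
      refine ⟨![s, t + x - s, t + y - s, s - x - y], ?_, ?_⟩
      · intro i
        fin_cases i <;> simp <;> linarith
      · rw [phi_eq]
        funext j
        fin_cases j <;> simp <;> ring

end
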